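/- arXiv:1202.2183 — 3 statements merged into one kernel-verified Lean document; each statement's English description precedes it below -/
import Mathlib

section
/- Let ω be a majorant, and let G be a proper subdomain of the plane such that each pair of points z, w ∈ G can be joined by a rectifiable curve γ ⊂ G with ∫_γ ω(d_G(ζ))/d_G(ζ) ds(ζ) ≤ C ω(|z−w|) for a fixed constant C = C(G,ω) > 0. Let f = h + ḡ be a harmonic mapping in G with h, g analytic in G. If f ∈ L_ω(G), then h ∈ L_ω(G) and g ∈ L_ω(G). -/
open MeasureTheory Metric Set Real
open scoped ENNReal

/-- A majorant: a continuous increasing function `ω : [0,∞) → [0,∞)` with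
`ω 0 = 0` such that `ω t / t` is non-increasing for `t > 0`. -/
def IsMajorant (ω : ℝ → ℝ) : Prop :=
  ContinuousOn ω (Ici 0) ∧ MonotoneOn ω (Ici 0) ∧ ω 0 = 0 ∧
    ∀ s t : ℝ, 0 < s → s ≤ t → ω t / t ≤ ω s / s

section Aux
open Complex Topology Filter

lemma intervalIntegral_conj' {f : ℝ → ℂ} {a b : ℝ} :
    (∫ t in a..b, (starRingEnd ℂ) (f t)) = (starRingEnd ℂ) (∫ t in a..b, f t) := by
  simp [intervalIntegral, ← integral_conj, map_sub]

lemma conj_part_zero {c : ℂ} {r : ℝ} (hr : 0 < r) {G : ℂ → ℂ}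
    (hG : DifferentiableOn ℂ G (closedBall c r)) :
    (∮ ζ in C(c, r), (ζ - c) ^ (-2 : ℤ) * (starRingEnd ℂ) (G ζ)) = 0 := by
  have hGc : ContinuousOn G (closedBall c r) := hG.continuousOn
  have hcirc : (∮ ζ in C(c, r), G ζ) = 0 :=
    circleIntegral_eq_zero_of_differentiable_on_off_countable hr.le Set.countable_empty hGc
      (fun z hz => (hG.mono ball_subset_closedBall).differentiableAt (isOpen_ball.mem_nhds hz.1))
  have inner : (∫ θ in (0:ℝ)..(2*π), circleMap 0 r θ * G (circleMap c r θ)) = 0 := by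
    have h1 : (∮ ζ in C(c, r), G ζ)
        = I * ∫ θ in (0:ℝ)..(2*π), circleMap 0 r θ * G (circleMap c r θ) := by
      rw [circleIntegral, ← intervalIntegral.integral_const_mul]
      congr 1; funext θ
      simp only [deriv_circleMap, smul_eq_mul]; ring
    rw [h1] at hcirc
    simpa [I_ne_zero] using hcirc
  have hmain : (∮ ζ in C(c, r), (ζ - c) ^ (-2 : ℤ) * (starRingEnd ℂ) (G ζ))
      = (I / (r:ℂ)^2) * (starRingEnd ℂ)
        (∫ θ in (0:ℝ)..(2*π), circleMap 0 r θ * G (circleMap c r θ)) := by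
    rw [circleIntegral, ← intervalIntegral_conj', ← intervalIntegral.integral_const_mul]
    congr 1; funext θ
    set ζ := circleMap 0 r θ with hζ
    have hne : ζ ≠ 0 := by simp [hζ, circleMap_eq_center_iff, hr.ne']
    have habs : ‖ζ‖ = r := by rw [hζ, norm_circleMap_zero, abs_of_pos hr]
    have hmulconj : ζ * (starRingEnd ℂ) ζ = (r:ℂ)^2 := by
      rw [Complex.mul_conj, ← Complex.sq_norm, habs]; push_cast; ring
    have hr2 : ((r:ℂ)^2) ≠ 0 := pow_ne_zero 2 (by exact_mod_cast hr.ne')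
    rw [deriv_circleMap, smul_eq_mul, circleMap_sub_center, map_mul, ← hζ]
    rw [zpow_neg, zpow_two]
    field_simp
    have hone : ζ * (starRingEnd ℂ) ζ * (r:ℂ)⁻¹ ^ 2 = 1 := by rw [hmulconj, inv_pow, mul_inv_cancel₀ hr2]
    linear_combination (-(starRingEnd ℂ) (G (circleMap c r θ))) * hone
  rw [hmain, inner]
  simp

lemma keyD {c : ℂ} {r : ℝ} (hr : 0 < r) {h g f : ℂ → ℂ}
    (hh : DifferentiableOn ℂ h (closedBall c r)) (hg : DifferentiableOn ℂ g (closedBall c r))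
    (hf : ∀ ζ ∈ closedBall c r, f ζ = h ζ + (starRingEnd ℂ) (g ζ))
    {M : ℝ} (hM : ∀ ζ ∈ sphere c r, ‖f ζ - f c‖ ≤ M) :
    ‖deriv h c‖ ≤ M / r := by
  have hsub : sphere c r ⊆ closedBall c r := sphere_subset_closedBall
  have hdc : DiffContOnCl ℂ h (ball c r) :=
    ⟨hh.mono ball_subset_closedBall, by rw [closure_ball c hr.ne']; exact hh.continuousOn⟩
  have hder : deriv h c = (2 * π * I : ℂ)⁻¹ • ∮ z in C(c, r), (z - c) ^ (-2 : ℤ) • h z := by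
    have h1 := hdc.deriv_eq_smul_circleIntegral hr
    have h2 : (∮ z in C(c, r), (z - c) ^ (-2 : ℤ) • h z)
        = ∮ z in C(c, r), (1 / (z - c) ^ 2) • h z := by
      congr 1; funext z; simp [zpow_neg, one_div]
    rw [h2, h1, smul_smul, inv_mul_cancel₀ (by simp [Real.pi_ne_zero, I_ne_zero]), one_smul]
  have hker : ContinuousOn (fun ζ : ℂ => (ζ - c) ^ (-2 : ℤ)) (sphere c r) := by
    apply ContinuousOn.zpow₀ (by fun_prop)
    intro ζ hζ
    left
    rw [sub_ne_zero]
    intro hcc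
    rw [mem_sphere, hcc] at hζ
    simp at hζ
    exact hr.ne hζ
  have int1 : CircleIntegrable (fun ζ : ℂ => (ζ - c) ^ (-2 : ℤ) * h ζ) c r :=
    (hker.mul (hh.continuousOn.mono hsub)).circleIntegrable hr.le
  have int2 : CircleIntegrable (fun ζ : ℂ => (ζ - c) ^ (-2 : ℤ) * (starRingEnd ℂ) (g ζ)) c r :=
    (hker.mul ((Complex.continuous_conj.comp_continuousOn
      (hg.continuousOn.mono hsub)))).circleIntegrable hr.le
  have int3 : CircleIntegrable (fun ζ : ℂ => (ζ - c) ^ (-2 : ℤ) * f c) c r :=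
    (hker.mul continuousOn_const).circleIntegrable hr.le
  have hzero1 : (∮ ζ in C(c, r), (ζ - c) ^ (-2 : ℤ) * (starRingEnd ℂ) (g ζ)) = 0 :=
    conj_part_zero hr hg
  have hzero2 : (∮ ζ in C(c, r), (ζ - c) ^ (-2 : ℤ) * f c) = 0 := by
    have h0 := circleIntegral.integral_sub_zpow_of_ne (by norm_num : (-2 : ℤ) ≠ -1) c c r
    simp_rw [← smul_eq_mul]
    rw [circleIntegral.integral_smul_const, h0, zero_smul]
  have hadd : ∀ {F G : ℂ → ℂ}, CircleIntegrable F c r → CircleIntegrable G c r →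
      (∮ ζ in C(c, r), (F ζ + G ζ)) = (∮ ζ in C(c, r), F ζ) + ∮ ζ in C(c, r), G ζ := by
    intro F G hF hG
    simp only [circleIntegral, smul_add, intervalIntegral.integral_add hF.out hG.out]
  have hdecomp : (∮ ζ in C(c, r), (ζ - c) ^ (-2 : ℤ) * (f ζ - f c))
      = (∮ ζ in C(c, r), (ζ - c) ^ (-2 : ℤ) * h ζ)
        + (∮ ζ in C(c, r), (ζ - c) ^ (-2 : ℤ) * (starRingEnd ℂ) (g ζ))
        - (∮ ζ in C(c, r), (ζ - c) ^ (-2 : ℤ) * f c) := by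
    have int12 : CircleIntegrable (fun ζ : ℂ => (ζ - c) ^ (-2 : ℤ) * h ζ
        + (ζ - c) ^ (-2 : ℤ) * (starRingEnd ℂ) (g ζ)) c r := int1.add int2
    rw [← hadd int1 int2, ← circleIntegral.integral_sub int12 int3]
    apply circleIntegral.integral_congr hr.le
    intro ζ hζ
    simp only [Pi.add_apply, Pi.sub_apply]
    rw [hf ζ (hsub hζ)]
    ring
  have hsplit : (∮ ζ in C(c, r), (ζ - c) ^ (-2 : ℤ) • h ζ)
      = ∮ ζ in C(c, r), (ζ - c) ^ (-2 : ℤ) * (f ζ - f c) := by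
    rw [hdecomp, hzero1, hzero2]
    simp only [smul_eq_mul, add_zero, sub_zero]
  rw [hder, hsplit]
  have hrr : (0:ℝ) < r * r := mul_pos hr hr
  have hbound : ∀ ζ ∈ sphere c r, ‖(ζ - c) ^ (-2 : ℤ) * (f ζ - f c)‖ ≤ M / (r * r) := by
    intro ζ hζ
    have habs : ‖ζ - c‖ = r := mem_sphere_iff_norm.mp hζ
    have h1 : ‖(ζ - c) ^ (-2 : ℤ)‖ = (r * r)⁻¹ := by
      rw [norm_zpow, habs, show (-2 : ℤ) = -(2 : ℕ) by norm_num,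
        zpow_neg, zpow_natCast, pow_two]
    calc ‖(ζ - c) ^ (-2 : ℤ) * (f ζ - f c)‖ = ‖f ζ - f c‖ / (r * r) := by
          rw [norm_mul, h1]; ring
      _ ≤ M / (r * r) := by gcongr; exact hM ζ hζ
  calc ‖(2 * ↑π * I : ℂ)⁻¹ • ∮ ζ in C(c, r), (ζ - c) ^ (-2 : ℤ) * (f ζ - f c)‖
      ≤ r * (M / (r * r)) :=
        circleIntegral.norm_two_pi_i_inv_smul_integral_le_of_norm_le_const hr.le hbound
    _ = M / r := by field_simp

lemma ball_infDist_frontier_subset' {G : Set ℂ} (hGopen : IsOpen G) {z : ℂ} (hz : z ∈ G) :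
    ball z (infDist z (frontier G)) ⊆ G := by
  set r := infDist z (frontier G) with hr
  rcases le_or_gt r 0 with hr0 | hr0
  · rw [ball_eq_empty.mpr hr0]; exact empty_subset _
  have hdisj : Disjoint (ball z r) (frontier G) := disjoint_ball_infDist
  have hsub : ball z r ⊆ G ∪ interior Gᶜ := by
    intro y hy
    by_contra hcon
    have hyG : y ∉ G := fun hyG => hcon (Or.inl hyG)
    have hyI : y ∉ interior Gᶜ := fun hyI => hcon (Or.inr hyI)
    have h1 : y ∈ closure G := by
      rwa [interior_compl, notMem_compl_iff] at hyI
    have h2 : y ∈ frontier G := by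
      rw [hGopen.frontier_eq]
      exact ⟨h1, hyG⟩
    exact (disjoint_left.mp hdisj hy) h2
  have hd2 : Disjoint G (interior Gᶜ) :=
    disjoint_compl_right.mono_right interior_subset
  rcases (convex_ball z r).isPreconnected.subset_or_subset hGopen isOpen_interior hd2 hsub with
    hcase | hcase
  · exact hcase
  · exfalso
    have : z ∈ interior Gᶜ := hcase (mem_ball_self hr0)
    exact (disjoint_left.mp hd2 hz) this

lemma derivBound (ω : ℝ → ℝ) (hmono : MonotoneOn ω (Ici 0)) {G : Set ℂ} (hGopen : IsOpen G)
    (hdpos : ∀ y ∈ G, 0 < infDist y (frontier G))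
    {h g f : ℂ → ℂ} (hh : DifferentiableOn ℂ h G) (hg : DifferentiableOn ℂ g G)
    (hfdec : ∀ z ∈ G, f z = h z + (starRingEnd ℂ) (g z))
    {K : ℝ} (hK : 0 < K)
    (hfL : ∀ z ∈ G, ∀ w ∈ G, ‖f z - f w‖ ≤ K * ω (dist z w))
    {z : ℂ} (hz : z ∈ G) :
    ‖deriv h z‖ ≤ (2 * K) * (ω (infDist z (frontier G)) / infDist z (frontier G)) := by
  set d := infDist z (frontier G) with hd
  have hd0 : 0 < d := hdpos z hz
  set r := d / 2 with hrdef
  have hr : 0 < r := by positivity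
  have hsubG : closedBall z r ⊆ G := by
    refine (closedBall_subset_ball ?_).trans (ball_infDist_frontier_subset' hGopen hz)
    rw [hrdef]; linarith
  have hM : ∀ ζ ∈ sphere z r, ‖f ζ - f z‖ ≤ K * ω d := by
    intro ζ hζ
    have hζG : ζ ∈ G := hsubG (sphere_subset_closedBall hζ)
    have h1 : ‖f ζ - f z‖ ≤ K * ω (dist ζ z) := hfL ζ hζG z hz
    have h2 : ω (dist ζ z) ≤ ω d := by
      have : dist ζ z = r := mem_sphere.mp hζ
      rw [this]
      exact hmono (mem_Ici.mpr hr.le) (mem_Ici.mpr hd0.le) (by rw [hrdef]; linarith)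
    exact h1.trans (mul_le_mul_of_nonneg_left h2 hK.le)
  have := keyD hr (hh.mono hsubG) (hg.mono hsubG)
    (fun ζ hζ => hfdec ζ (hsubG hζ)) hM
  calc ‖deriv h z‖ ≤ K * ω d / r := this
    _ = (2 * K) * (ω d / d) := by rw [hrdef]; field_simp

lemma lipAux (ω : ℝ → ℝ) (hωc : ContinuousOn ω (Ici 0))
    (hω0 : ∀ x : ℝ, 0 ≤ x → 0 ≤ ω x)
    {G : Set ℂ} (hGopen : IsOpen G)
    (hdpos : ∀ y ∈ G, 0 < infDist y (frontier G))
    {K' : ℝ} (hK' : 0 < K') {H : ℂ → ℂ} (hH : DifferentiableOn ℂ H G)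
    (hDb : ∀ y ∈ G, ‖deriv H y‖ ≤ K' * (ω (infDist y (frontier G)) / infDist y (frontier G)))
    {z w : ℂ} (hz : z ∈ G) (hw : w ∈ G) {CB : ℝ}
    (γ : ℝ → ℂ) (hγ0 : γ 0 = z) (hγ1 : γ 1 = w) (hγG : ∀ t ∈ Icc (0:ℝ) 1, γ t ∈ G)
    (hγC1 : ContDiffOn ℝ 1 γ (Icc (0:ℝ) 1))
    (hint : (∫ t in (0:ℝ)..1,
        ω (infDist (γ t) (frontier G)) / infDist (γ t) (frontier G) * ‖deriv γ t‖) ≤ CB) :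
    ‖H z - H w‖ ≤ K' * CB := by
  set d : ℂ → ℝ := fun y => infDist y (frontier G) with hddef
  have hγcont : ContinuousOn γ (Icc 0 1) := hγC1.continuousOn
  have hdγ : ∀ t ∈ Ioo (0:ℝ) 1, HasDerivAt γ (deriv γ t) t := by
    intro t ht
    have h1 : Icc (0:ℝ) 1 ∈ 𝓝 t := Icc_mem_nhds ht.1 ht.2
    exact ((hγC1.differentiableOn one_ne_zero t (Ioo_subset_Icc_self ht)).differentiableAt
      h1).hasDerivAt
  set F : ℝ → ℝ := fun t => ω (d (γ t)) / d (γ t) * ‖derivWithin γ (Icc (0:ℝ) 1) t‖ with hFdef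
  have hdcont : ContinuousOn (fun t => d (γ t)) (Icc (0:ℝ) 1) :=
    (continuous_infDist_pt (frontier G)).comp_continuousOn hγcont
  have hFcont : ContinuousOn F (Icc (0:ℝ) 1) := by
    apply ContinuousOn.mul
    · apply ContinuousOn.div
      · exact hωc.comp hdcont (fun t _ => mem_Ici.mpr infDist_nonneg)
      · exact hdcont
      · exact fun t ht => (hdpos (γ t) (hγG t ht)).ne'
    · exact (hγC1.continuousOn_derivWithin (uniqueDiffOn_Icc one_pos) le_rfl).norm
  have hFnonneg : ∀ t : ℝ, 0 ≤ F t := fun t =>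
    mul_nonneg (div_nonneg (hω0 _ infDist_nonneg) infDist_nonneg) (norm_nonneg _)
  have hFeq : ∀ t ∈ Ioo (0:ℝ) 1,
      ω (d (γ t)) / d (γ t) * ‖deriv γ t‖ = F t := by
    intro t ht
    rw [hFdef]
    simp only
    rw [derivWithin_of_mem_nhds (Icc_mem_nhds ht.1 ht.2)]
  have hFint : IntervalIntegrable F volume 0 1 := by
    apply ContinuousOn.intervalIntegrable
    rwa [uIcc_of_le zero_le_one]
  have hintF : (∫ t in (0:ℝ)..1, F t) ≤ CB := by
    have hae : ∀ᵐ t : ℝ, t ≠ 1 := by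
      rw [ae_iff]
      simp only [not_not]
      rw [show {t : ℝ | t = 1} = {1} from rfl]
      exact measure_singleton 1
    have heq : (∫ t in (0:ℝ)..1, F t)
        = ∫ t in (0:ℝ)..1, ω (d (γ t)) / d (γ t) * ‖deriv γ t‖ := by
      apply intervalIntegral.integral_congr_ae
      filter_upwards [hae] with t ht htmem
      rw [uIoc_of_le zero_le_one] at htmem
      exact (hFeq t ⟨htmem.1, lt_of_le_of_ne htmem.2 ht⟩).symm
    rw [heq]
    exact hint
  have hK'Fint : IntervalIntegrable (fun t => K' * F t) volume 0 1 := hFint.const_mul K'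
  -- main estimate on subintervals
  have main : ∀ a b : ℝ, a ∈ Ioo (0:ℝ) 1 → b ∈ Ioo (0:ℝ) 1 → a ≤ b →
      ‖H (γ b) - H (γ a)‖ ≤ K' * CB := by
    intro a b ha hb hab
    have hIccsub : Icc a b ⊆ Ioo (0:ℝ) 1 := fun t ht =>
      ⟨lt_of_lt_of_le ha.1 ht.1, lt_of_le_of_lt ht.2 hb.2⟩
    have hHd : ∀ t ∈ uIcc a b, HasDerivAt (H ∘ γ) (deriv H (γ t) * deriv γ t) t := by
      intro t ht
      rw [uIcc_of_le hab] at ht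
      have htI := hIccsub ht
      have h3 : DifferentiableAt ℂ H (γ t) :=
        hH.differentiableAt (hGopen.mem_nhds (hγG t (Ioo_subset_Icc_self htI)))
      exact h3.hasDerivAt.comp t (hdγ t htI)
    have hγderiv_cont : ContinuousOn (fun t => deriv γ t) (Ioo (0:ℝ) 1) :=
      ((hγC1.continuousOn_derivWithin (uniqueDiffOn_Icc one_pos) le_rfl).mono
        Ioo_subset_Icc_self).congr
        (fun t ht => (derivWithin_of_mem_nhds (Icc_mem_nhds ht.1 ht.2)).symm)
    have hHderiv_cont : ContinuousOn (fun y => deriv H y) G :=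
      ((hH.analyticOnNhd hGopen).deriv).continuousOn
    have hder_cont : ContinuousOn (fun t => deriv H (γ t) * deriv γ t) (Icc a b) := by
      apply ContinuousOn.mul
      · exact (hHderiv_cont.comp hγcont (fun t ht => hγG t ht)).mono
          ((hIccsub.trans Ioo_subset_Icc_self))
      · exact hγderiv_cont.mono hIccsub
    have hder_cont' : ContinuousOn (fun t => deriv H (γ t) * deriv γ t) (uIcc a b) := by
      rw [uIcc_of_le hab]; exact hder_cont
    have hintd : IntervalIntegrable (fun t => deriv H (γ t) * deriv γ t) volume a b :=
      hder_cont'.intervalIntegrable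
    have heqint : (∫ t in a..b, deriv H (γ t) * deriv γ t) = H (γ b) - H (γ a) :=
      intervalIntegral.integral_eq_sub_of_hasDerivAt hHd hintd
    have hptwise : ∀ t ∈ Icc a b, ‖deriv H (γ t) * deriv γ t‖ ≤ K' * F t := by
      intro t ht
      have htI := hIccsub ht
      rw [norm_mul, ← hFeq t htI, ← mul_assoc]
      exact mul_le_mul_of_nonneg_right
        (hDb (γ t) (hγG t (Ioo_subset_Icc_self htI))) (norm_nonneg _)
    calc ‖H (γ b) - H (γ a)‖ = ‖∫ t in a..b, deriv H (γ t) * deriv γ t‖ := by rw [heqint]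
      _ ≤ ∫ t in a..b, ‖deriv H (γ t) * deriv γ t‖ :=
          intervalIntegral.norm_integral_le_integral_norm hab
      _ ≤ ∫ t in a..b, K' * F t := by
          apply intervalIntegral.integral_mono_on hab hder_cont'.norm.intervalIntegrable
            (hK'Fint.mono_set ?_) hptwise
          rw [uIcc_of_le hab, uIcc_of_le zero_le_one]
          exact (hIccsub.trans Ioo_subset_Icc_self)
      _ ≤ ∫ t in (0:ℝ)..1, K' * F t := by
          apply intervalIntegral.integral_mono_interval ha.1.le hab hb.2.le
            (Filter.Eventually.of_forall fun t => mul_nonneg hK'.le (hFnonneg t)) hK'Fint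
      _ = K' * ∫ t in (0:ℝ)..1, F t := intervalIntegral.integral_const_mul K' F
      _ ≤ K' * CB := mul_le_mul_of_nonneg_left hintF hK'.le
  -- limiting argument
  set u : ℕ → ℝ := fun n => 1 / (n + 2 : ℝ) with hudef
  set v : ℕ → ℝ := fun n => 1 - 1 / (n + 2 : ℝ) with hvdef
  have hn2 : ∀ n : ℕ, (0:ℝ) < (n:ℝ) + 2 := fun n => by positivity
  have hu_mem : ∀ n, u n ∈ Ioo (0:ℝ) 1 := by
    intro n
    constructor
    · positivity
    · rw [hudef]
      simp only
      rw [div_lt_one (hn2 n)]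
      have : (0:ℝ) ≤ (n:ℝ) := Nat.cast_nonneg n
      linarith
  have hv_mem : ∀ n, v n ∈ Ioo (0:ℝ) 1 := by
    intro n
    have := hu_mem n
    constructor
    · simp only [hvdef]; linarith [this.2]
    · simp only [hvdef]; linarith [this.1]
  have huv : ∀ n, u n ≤ v n := by
    intro n
    have h2 : (2:ℝ) ≤ (n:ℝ) + 2 := by
      have : (0:ℝ) ≤ (n:ℝ) := Nat.cast_nonneg n
      linarith
    have : (1:ℝ) / ((n:ℝ) + 2) ≤ 1 / 2 :=
      one_div_le_one_div_of_le (by norm_num) h2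
    simp only [hudef, hvdef]
    linarith
  have hu_tend : Filter.Tendsto u Filter.atTop (nhds 0) := by
    have h1 : Filter.Tendsto (fun n : ℕ => ((n:ℝ) + 2)) Filter.atTop Filter.atTop :=
      Filter.tendsto_atTop_add_const_right _ 2 tendsto_natCast_atTop_atTop
    convert h1.inv_tendsto_atTop using 1; funext n; simp [hudef, one_div]
  have hv_tend : Filter.Tendsto v Filter.atTop (nhds 1) := by
    have := hu_tend
    have h2 : Filter.Tendsto (fun n => 1 - u n) Filter.atTop (nhds (1 - 0)) :=
      Filter.Tendsto.sub tendsto_const_nhds this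
    simpa [hvdef, hudef] using h2
  have hHcont : ∀ {y : ℂ}, y ∈ G → ContinuousAt H y := fun {y} hy =>
    (hH.differentiableAt (hGopen.mem_nhds hy)).continuousAt
  have hγu : Filter.Tendsto (fun n => γ (u n)) Filter.atTop (nhds z) := by
    rw [← hγ0]
    apply ((hγcont 0 ⟨le_refl 0, zero_le_one⟩).tendsto).comp
    apply tendsto_nhdsWithin_of_tendsto_nhds_of_eventually_within _ hu_tend
    exact Filter.Eventually.of_forall fun n => Ioo_subset_Icc_self (hu_mem n)
  have hγv : Filter.Tendsto (fun n => γ (v n)) Filter.atTop (nhds w) := by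
    rw [← hγ1]
    apply ((hγcont 1 ⟨zero_le_one, le_refl 1⟩).tendsto).comp
    apply tendsto_nhdsWithin_of_tendsto_nhds_of_eventually_within _ hv_tend
    exact Filter.Eventually.of_forall fun n => Ioo_subset_Icc_self (hv_mem n)
  have hlim : Filter.Tendsto (fun n => ‖H (γ (v n)) - H (γ (u n))‖)
      Filter.atTop (nhds ‖H w - H z‖) :=
    (((hHcont hw).tendsto.comp hγv).sub ((hHcont hz).tendsto.comp hγu)).norm
  have hfinal : ‖H w - H z‖ ≤ K' * CB :=
    le_of_tendsto hlim (Filter.Eventually.of_forall fun n =>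
      main (u n) (v n) (hu_mem n) (hv_mem n) (huv n))
  rwa [norm_sub_rev]

end Aux

/-- let `ω` be a majorant and `G` a proper subdomain of the plane
such that any two points of `G` are joined by a rectifiable curve `γ ⊆ G` with
`∫_γ ω(d_G(ζ))/d_G(ζ) ds(ζ) ≤ C ω(|z-w|)`. If `f = h + ḡ` is harmonic in `G` with
`h, g` analytic in `G` and `f ∈ L_ω(G)`, then `h ∈ L_ω(G)` and `g ∈ L_ω(G)`. -/
theorem stmt8 (ω : ℝ → ℝ) (hω : IsMajorant ω)
    (G : Set ℂ) (hGopen : IsOpen G) (hGconn : IsConnected G) (hGproper : G ≠ univ)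
    (C : ℝ) (hC : 0 < C)
    (hcurve : ∀ z ∈ G, ∀ w ∈ G, ∃ γ : ℝ → ℂ,
      γ 0 = z ∧ γ 1 = w ∧ (∀ t ∈ Icc (0:ℝ) 1, γ t ∈ G) ∧
      ContDiffOn ℝ 1 γ (Icc (0:ℝ) 1) ∧
      (∫ t in (0:ℝ)..1,
          ω (infDist (γ t) (frontier G)) / infDist (γ t) (frontier G) * ‖deriv γ t‖)
        ≤ C * ω (dist z w))
    (h g f : ℂ → ℂ) (hh : DifferentiableOn ℂ h G) (hg : DifferentiableOn ℂ g G)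
    (hfdec : ∀ z ∈ G, f z = h z + (starRingEnd ℂ) (g z))
    (hfLip : ∃ K > (0 : ℝ), ∀ z ∈ G, ∀ w ∈ G, ‖f z - f w‖ ≤ K * ω (dist z w)) :
    (∃ K > (0 : ℝ), ∀ z ∈ G, ∀ w ∈ G, ‖h z - h w‖ ≤ K * ω (dist z w)) ∧
    (∃ K > (0 : ℝ), ∀ z ∈ G, ∀ w ∈ G, ‖g z - g w‖ ≤ K * ω (dist z w)) := by
  obtain ⟨K, hK, hfL⟩ := hfLip
  obtain ⟨hωc, hωmono, hω0eq, hωdec⟩ := hω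
  have hω0 : ∀ x : ℝ, 0 ≤ x → 0 ≤ ω x := fun x hx => by
    rw [← hω0eq]
    exact hωmono (mem_Ici.mpr le_rfl) (mem_Ici.mpr hx) hx
  have hfne : (frontier G).Nonempty := nonempty_frontier_iff.mpr ⟨hGconn.nonempty, hGproper⟩
  have hdpos : ∀ y ∈ G, 0 < infDist y (frontier G) := by
    intro y hy
    rw [← IsClosed.notMem_iff_infDist_pos isClosed_frontier hfne]
    rw [hGopen.frontier_eq]
    exact fun hc => hc.2 hy
  have h2K : (0:ℝ) < 2 * K := by linarith
  have hKC : (0:ℝ) < 2 * K * C := by positivity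
  have Dh : ∀ y ∈ G,
      ‖deriv h y‖ ≤ (2 * K) * (ω (infDist y (frontier G)) / infDist y (frontier G)) :=
    fun y hy => derivBound ω hωmono hGopen hdpos hh hg hfdec hK hfL hy
  have hfdec' : ∀ y ∈ G,
      (starRingEnd ℂ) (f y) = g y + (starRingEnd ℂ) (h y) := by
    intro y hy
    rw [hfdec y hy, map_add, Complex.conj_conj]
    ring
  have hfL' : ∀ y ∈ G, ∀ w ∈ G,
      ‖(starRingEnd ℂ) (f y) - (starRingEnd ℂ) (f w)‖ ≤ K * ω (dist y w) := by
    intro y hy w hw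
    rw [← map_sub, RCLike.norm_conj]
    exact hfL y hy w hw
  have Dg : ∀ y ∈ G,
      ‖deriv g y‖ ≤ (2 * K) * (ω (infDist y (frontier G)) / infDist y (frontier G)) :=
    fun y hy => derivBound ω hωmono hGopen hdpos hg hh hfdec' hK hfL' hy
  constructor
  · refine ⟨2 * K * C, hKC, ?_⟩
    intro z hz w hw
    obtain ⟨γ, hγ0, hγ1, hγG, hγC1, hintγ⟩ := hcurve z hz w hw
    have := lipAux ω hωc hω0 hGopen hdpos h2K hh Dh hz hw γ hγ0 hγ1 hγG hγC1 hintγ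
    calc ‖h z - h w‖ ≤ 2 * K * (C * ω (dist z w)) := this
      _ = 2 * K * C * ω (dist z w) := by ring
  · refine ⟨2 * K * C, hKC, ?_⟩
    intro z hz w hw
    obtain ⟨γ, hγ0, hγ1, hγG, hγC1, hintγ⟩ := hcurve z hz w hw
    have := lipAux ω hωc hω0 hGopen hdpos h2K hg Dg hz hw γ hγ0 hγ1 hγG hγC1 hintγ
    calc ‖g z - g w‖ ≤ 2 * K * (C * ω (dist z w)) := this
      _ = 2 * K * C * ω (dist z w) := by ring
end

section
/- For a complex constant C, the harmonic mapping f(z) = C(z + z̄) on the unit disk D satisfies β_f = sup_{z ∈ D} (1−|z|²) Λ_f(z) = 2|C| and ‖f‖_{BMO_2} = |C|; in particular β_f = 2 ‖f‖_{BMO_2}, so the constant 2 in the inequality β_f ≤ 2‖f‖_{BMO_2} is sharp. -/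
open Complex MeasureTheory Metric Set Real
open scoped ENNReal

/-- The Wirtinger derivative `f_z = (f_x - i f_y)/2` of `f` at `z`
(real Fréchet derivative applied to the directions `1` and `i`). -/
noncomputable def wirtingerZ (f : ℂ → ℂ) (z : ℂ) : ℂ :=
  (fderiv ℝ f z 1 - Complex.I * fderiv ℝ f z Complex.I) / 2

/-- The Wirtinger derivative `f_z̄ = (f_x + i f_y)/2` of `f` at `z`. -/
noncomputable def wirtingerZbar (f : ℂ → ℂ) (z : ℂ) : ℂ :=
  (fderiv ℝ f z 1 + Complex.I * fderiv ℝ f z Complex.I) / 2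

/-- `Λ_f(z) = |f_z(z)| + |f_z̄(z)|`. -/
noncomputable def Lam (f : ℂ → ℂ) (z : ℂ) : ℝ :=
  ‖wirtingerZ f z‖ + ‖wirtingerZbar f z‖

/-- A complex-valued function is harmonic on a set: it is `C²` there and its
Laplacian `f_xx + f_yy` vanishes (equivalently, its real and imaginary parts are
real harmonic). -/
def IsHarmonicOn (f : ℂ → ℂ) (s : Set ℂ) : Prop :=
  ContDiffOn ℝ 2 f s ∧ ∀ z ∈ s,
    fderiv ℝ (fun w => fderiv ℝ f w 1) z 1
      + fderiv ℝ (fun w => fderiv ℝ f w Complex.I) z Complex.I = 0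

/-- The `BMO_p` norm of `f` on the unit disk (valued in `ℝ≥0∞` so that membership in
`BMO_p` is finiteness): the supremum over all disks `D(z,r) ⊆ 𝔻` with `r ∈ (0, 1-|z|]`
of `{(1/(πr²)) ∫_{D(z,r)} |f(ζ) - (1/(πr²)) ∫_{D(z,r)} f dA|^p dA(ζ)}^{1/p}`. -/
noncomputable def bmoNorm (f : ℂ → ℂ) (p : ℝ) : ℝ≥0∞ :=
  ⨆ (z : ℂ) (_ : ‖z‖ < 1) (r : ℝ) (_ : 0 < r) (_ : r ≤ 1 - ‖z‖),
    ENNReal.ofReal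
      (((π * r ^ 2)⁻¹ *
          ∫ ζ in ball z r,
            ‖f ζ - (π * r ^ 2)⁻¹ • ∫ ξ in ball z r, f ξ‖ ^ p) ^ (1 / p))

/-- The Bloch (Lipschitz) number `β_f = sup_{z ∈ 𝔻} (1-|z|²) Λ_f(z)`,
valued in `ℝ≥0∞`. -/
noncomputable def blochNorm (f : ℂ → ℂ) : ℝ≥0∞ :=
  ⨆ (z : ℂ) (_ : ‖z‖ < 1), ENNReal.ofReal ((1 - ‖z‖ ^ 2) * Lam f z)

/-! ### Auxiliary lemmas -/

noncomputable def myL (C : ℂ) : ℂ →L[ℝ] ℂ :=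
  C • (ContinuousLinearMap.id ℝ ℂ + Complex.conjCLE.toContinuousLinearMap)

lemma myL_apply (C v : ℂ) : myL C v = C * (v + (starRingEnd ℂ) v) := by
  simp [myL, smul_eq_mul]; ring

lemma myL_fderiv (C z : ℂ) :
    fderiv ℝ (fun z => C * (z + (starRingEnd ℂ) z)) z = myL C := by
  have : (fun z => C * (z + (starRingEnd ℂ) z)) = ⇑(myL C) := by
    funext v; rw [myL_apply]
  rw [this]; exact (myL C).fderiv

lemma lam_eq (C z : ℂ) : Lam (fun z => C * (z + (starRingEnd ℂ) z)) z = 2 * ‖C‖ := by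
  unfold Lam wirtingerZ wirtingerZbar
  rw [myL_fderiv, myL_apply, myL_apply]
  simp only [Complex.conj_I, map_one]
  ring_nf

lemma integral_re_sq_ball (r : ℝ) (hr : 0 < r) :
    ∫ ζ in ball (0:ℂ) r, (ζ.re)^2 = π * r^4 / 4 := by
  have htarget : polarCoord.target = Set.Ioi (0:ℝ) ×ˢ Set.Ioo (-π) π := rfl
  rw [← integral_indicator measurableSet_ball, ← Complex.integral_comp_polarCoord_symm, htarget]
  have h : ∀ p ∈ Set.Ioi (0:ℝ) ×ˢ Set.Ioo (-π) π,
      p.1 • (ball (0:ℂ) r).indicator (fun ζ => (ζ.re)^2) (Complex.polarCoord.symm p)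
      = (Set.Ioo (0:ℝ) r).indicator (fun x => x^3) p.1 * (Real.cos p.2)^2 := by
    rintro ⟨ρ, θ⟩ ⟨hρ, hθ⟩
    simp only [Set.mem_Ioi] at hρ
    have habs : ‖Complex.polarCoord.symm (ρ, θ)‖ = ρ := by
      rw [Complex.norm_polarCoord_symm]; exact abs_of_pos hρ
    have hre : (Complex.polarCoord.symm (ρ, θ)).re = ρ * Real.cos θ := by
      simp [Complex.polarCoord_symm_apply, Complex.cos_ofReal_re]
    by_cases hlt : ρ < r
    · rw [Set.indicator_of_mem, Set.indicator_of_mem (by exact ⟨hρ, hlt⟩)]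
      · rw [hre]; simp only [smul_eq_mul]; ring
      · simp only [mem_ball, Complex.dist_eq, sub_zero, habs]; exact hlt
    · rw [Set.indicator_of_notMem, Set.indicator_of_notMem (by simp [hlt, hρ.le])]
      · simp
      · simp only [mem_ball, Complex.dist_eq, sub_zero, habs]; exact hlt
  rw [setIntegral_congr_fun (measurableSet_Ioi.prod measurableSet_Ioo) h,
    Measure.volume_eq_prod,
    setIntegral_prod_mul (fun x : ℝ => (Set.Ioo (0:ℝ) r).indicator (fun x => x^3) x)
      (fun θ : ℝ => Real.cos θ^2) (Set.Ioi (0:ℝ)) (Set.Ioo (-π) π)]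
  have h1 : ∫ x in Set.Ioi (0:ℝ), (Set.Ioo (0:ℝ) r).indicator (fun x => x^3) x = r^4/4 := by
    rw [setIntegral_indicator measurableSet_Ioo,
      Set.inter_eq_self_of_subset_right Set.Ioo_subset_Ioi_self,
      ← integral_Ioc_eq_integral_Ioo, ← intervalIntegral.integral_of_le hr.le, integral_pow]
    norm_num
  have h2 : ∫ θ in Set.Ioo (-π) π, Real.cos θ^2 = π := by
    rw [← integral_Ioc_eq_integral_Ioo,
      ← intervalIntegral.integral_of_le (by linarith [Real.pi_pos] : -π ≤ π), integral_cos_sq]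
    simp [Real.sin_pi]
  rw [h1, h2]; ring

lemma transl (z : ℂ) (r : ℝ) (g : ℂ → ℝ) :
    ∫ ζ in ball z r, g (ζ - z) = ∫ ζ in ball (0:ℂ) r, g ζ := by
  have h := (measurePreserving_add_right (volume : Measure ℂ) z).setIntegral_preimage_emb
    (MeasurableEquiv.addRight z).measurableEmbedding (fun ζ => g (ζ - z)) (ball z r)
  have hpre : (fun ζ : ℂ => ζ + z) ⁻¹' (ball z r) = ball (0:ℂ) r := by
    ext ζ; simp [mem_ball, Complex.dist_eq]
  rw [hpre] at h
  rw [← h]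
  simp

lemma odd_int (r : ℝ) (g : ℂ → ℂ) (hodd : ∀ ζ, g (-ζ) = - g ζ) :
    ∫ ζ in ball (0:ℂ) r, g ζ = 0 := by
  have h := (Measure.measurePreserving_neg (volume : Measure ℂ)).setIntegral_preimage_emb
    (MeasurableEquiv.neg ℂ).measurableEmbedding g (ball (0:ℂ) r)
  have hpre : (fun ζ : ℂ => -ζ) ⁻¹' (ball (0:ℂ) r) = ball (0:ℂ) r := by
    ext ζ; simp [mem_ball]
  rw [show (Neg.neg ⁻¹' ball (0:ℂ) r) = ball (0:ℂ) r from hpre] at h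
  have h2 : ∫ ζ in ball (0:ℂ) r, g (-ζ) = ∫ ζ in ball (0:ℂ) r, (- g ζ) :=
    setIntegral_congr_fun measurableSet_ball fun ζ _ => hodd ζ
  rw [h2, integral_neg] at h
  linear_combination (h : -∫ (a : ℂ) in ball 0 r, g a = ∫ (y : ℂ) in ball 0 r, g y) / (-2)

lemma f_integrableOn (C z : ℂ) (r : ℝ) :
    IntegrableOn (fun z => C * (z + (starRingEnd ℂ) z)) (ball z r) := by
  have hc : Continuous (fun z : ℂ => C * (z + (starRingEnd ℂ) z)) := by continuity
  exact (hc.continuousOn.integrableOn_compact (isCompact_closedBall z r)).mono_set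
    ball_subset_closedBall

lemma avg_eq (C z : ℂ) (r : ℝ) (hr : 0 < r) :
    (π * r ^ 2)⁻¹ • ∫ ξ in ball z r, (fun z => C * (z + (starRingEnd ℂ) z)) ξ
      = C * (z + (starRingEnd ℂ) z) := by
  set f : ℂ → ℂ := fun z => C * (z + (starRingEnd ℂ) z) with hf
  have hadd : ∀ a b, f (a + b) = f a + f b := by intro a b; simp only [hf, map_add]; ring
  have h1 : ∫ ξ in ball z r, f ξ = ∫ ξ in ball (0:ℂ) r, f (ξ + z) := by
    have h := (measurePreserving_add_right (volume : Measure ℂ) z).setIntegral_preimage_emb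
      (MeasurableEquiv.addRight z).measurableEmbedding f (ball z r)
    have hpre : (fun ζ : ℂ => ζ + z) ⁻¹' (ball z r) = ball (0:ℂ) r := by
      ext ζ; simp [mem_ball, Complex.dist_eq]
    rw [hpre] at h
    rw [← h]
  have h2 : ∫ ξ in ball (0:ℂ) r, f (ξ + z) = ∫ ξ in ball (0:ℂ) r, (f ξ + f z) :=
    setIntegral_congr_fun measurableSet_ball fun ξ _ => hadd ξ z
  have h3 : ∫ ξ in ball (0:ℂ) r, f ξ = 0 := by
    apply odd_int
    intro ζ; simp only [hf, map_neg]; ring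
  have h4 : IntegrableOn f (ball (0:ℂ) r) := f_integrableOn C 0 r
  rw [h1, h2, integral_add h4 (integrableOn_const measure_ball_lt_top.ne), h3,
    zero_add, setIntegral_const]
  have hvol : (volume (ball (0:ℂ) r)).toReal = π * r ^ 2 := by
    rw [Complex.volume_ball]
    rw [ENNReal.toReal_mul, ← ENNReal.ofReal_pow hr.le, ENNReal.toReal_ofReal (by positivity)]
    simp [NNReal.coe_real_pi]
    ring
  rw [measureReal_def, hvol, smul_smul, inv_mul_cancel₀ (by positivity)]
  simp [hf]

lemma second_moment (C z : ℂ) (r : ℝ) (hr : 0 < r) :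
    ∫ ζ in ball z r, ‖C * (ζ + (starRingEnd ℂ) ζ) - C * (z + (starRingEnd ℂ) z)‖ ^ (2:ℕ)
      = ‖C‖^2 * π * r^4 := by
  have key : ∀ ζ : ℂ, ‖C * (ζ + (starRingEnd ℂ) ζ) - C * (z + (starRingEnd ℂ) z)‖ ^ (2:ℕ)
      = 4 * ‖C‖^2 * ((ζ - z).re)^2 := by
    intro ζ
    have h5 := Complex.add_conj (ζ - z)
    push_cast at h5
    have : C * (ζ + (starRingEnd ℂ) ζ) - C * (z + (starRingEnd ℂ) z)
        = C * (2 * ((ζ - z).re : ℂ)) := by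
      rw [← h5, map_sub]; ring
    rw [this, norm_mul]
    rw [show ‖(2 : ℂ) * ((ζ - z).re : ℂ)‖ = 2 * |(ζ - z).re| by
      rw [norm_mul, Complex.norm_real, Real.norm_eq_abs]; norm_num]
    rw [mul_pow, mul_pow, _root_.sq_abs]
    ring
  rw [setIntegral_congr_fun measurableSet_ball (fun ζ _ => key ζ), MeasureTheory.integral_const_mul,
    transl z r (fun w => (w.re)^2), integral_re_sq_ball r hr]
  ring

lemma bmo_term (C z : ℂ) (r : ℝ) (hr : 0 < r) :
    ((π * r ^ 2)⁻¹ *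
        ∫ ζ in ball z r,
          ‖(fun z => C * (z + (starRingEnd ℂ) z)) ζ -
            (π * r ^ 2)⁻¹ • ∫ ξ in ball z r, (fun z => C * (z + (starRingEnd ℂ) z)) ξ‖
              ^ (2:ℝ)) ^ (1/(2:ℝ))
      = ‖C‖ * r := by
  rw [avg_eq C z r hr]
  have hc : ∀ ζ : ℂ, ‖(fun z => C * (z + (starRingEnd ℂ) z)) ζ -
      C * (z + (starRingEnd ℂ) z)‖ ^ (2:ℝ)
      = ‖C * (ζ + (starRingEnd ℂ) ζ) - C * (z + (starRingEnd ℂ) z)‖ ^ (2:ℕ) := by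
    intro ζ
    rw [← Real.rpow_natCast]
    norm_num
  rw [setIntegral_congr_fun measurableSet_ball (fun ζ _ => hc ζ), second_moment C z r hr]
  have : (π * r ^ 2)⁻¹ * (‖C‖ ^ 2 * π * r ^ 4) = (‖C‖ * r)^2 := by
    field_simp
  rw [this, ← Real.sqrt_eq_rpow, Real.sqrt_sq (by positivity)]

/-- for a complex constant `C`, the harmonic mapping
`f(z) = C(z + z̄)` on the unit disk satisfies `β_f = 2|C|` and `‖f‖_{BMO₂} = |C|`;
in particular `β_f = 2 ‖f‖_{BMO₂}`, so the constant `2` in `β_f ≤ 2‖f‖_{BMO₂}` is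
sharp. -/
theorem stmt12 (C : ℂ) :
    blochNorm (fun z => C * (z + (starRingEnd ℂ) z)) = ENNReal.ofReal (2 * ‖C‖) ∧
    bmoNorm (fun z => C * (z + (starRingEnd ℂ) z)) 2 = ENNReal.ofReal ‖C‖ ∧
    blochNorm (fun z => C * (z + (starRingEnd ℂ) z)) =
      2 * bmoNorm (fun z => C * (z + (starRingEnd ℂ) z)) 2 := by
  have hbloch : blochNorm (fun z => C * (z + (starRingEnd ℂ) z)) = ENNReal.ofReal (2 * ‖C‖) := by
    unfold blochNorm
    apply le_antisymm
    · refine iSup_le fun z => iSup_le fun hz => ?_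
      rw [lam_eq]
      apply ENNReal.ofReal_le_ofReal
      nlinarith [norm_nonneg z, norm_nonneg C, sq_nonneg ‖z‖]
    · apply le_iSup_of_le (0:ℂ)
      apply le_iSup_of_le (show ‖(0:ℂ)‖ < 1 by norm_num)
      rw [lam_eq]
      simp
  have hbmo : bmoNorm (fun z => C * (z + (starRingEnd ℂ) z)) 2 = ENNReal.ofReal ‖C‖ := by
    unfold bmoNorm
    apply le_antisymm
    · refine iSup_le fun z => iSup_le fun hz => iSup_le fun r => iSup_le fun hr =>
        iSup_le fun hr' => ?_
      rw [bmo_term C z r hr]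
      apply ENNReal.ofReal_le_ofReal
      have : r ≤ 1 := le_trans hr' (by linarith [norm_nonneg z])
      nlinarith [norm_nonneg C]
    · apply le_iSup_of_le (0:ℂ)
      apply le_iSup_of_le (show ‖(0:ℂ)‖ < 1 by norm_num)
      apply le_iSup_of_le (1:ℝ)
      apply le_iSup_of_le one_pos
      apply le_iSup_of_le (by norm_num : (1:ℝ) ≤ 1 - ‖(0:ℂ)‖)
      rw [bmo_term C 0 1 one_pos]
      simp
  refine ⟨hbloch, hbmo, ?_⟩
  rw [hbloch, hbmo, ← ENNReal.ofReal_ofNat 2, ← ENNReal.ofReal_mul (by norm_num)]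
end

section
/- Let f be a harmonic mapping in the unit disk D with finite Bloch number β = sup_{z ∈ D} (1−|z|²) Λ_f(z). Then for every r ∈ (0,1), (1/2π) ∫_0^{2π} |f(re^{iθ}) − f(0)|² dθ ≤ β² ∑_{n=1}^∞ r^{2n}/n = β² log(1/(1−r²)). -/
open Complex MeasureTheory Metric Set Real
open scoped ENNReal RealInnerProductSpace

namespace St19

/-- unit vector `e^{iθ}` -/
noncomputable def Ee (θ : ℝ) : ℂ := Complex.exp ((θ : ℂ) * Complex.I)

/-- polar point `s e^{iθ}` -/
noncomputable def zm (s θ : ℝ) : ℂ := (s : ℂ) * Ee θ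

variable (f : ℂ → ℂ)

noncomputable def Gg (z : ℂ) : ℂ := f z - f 0
noncomputable def D1 (z : ℂ) : ℂ →L[ℝ] ℂ := fderiv ℝ f z
noncomputable def D2 (z : ℂ) : ℂ →L[ℝ] ℂ →L[ℝ] ℂ := fderiv ℝ (fderiv ℝ f) z
noncomputable def Pp (z v : ℂ) : ℝ := 2 * ⟪Gg f z, D1 f z v⟫
noncomputable def Ss (z a b : ℂ) : ℝ :=
  2 * ⟪D1 f z a, D1 f z b⟫ + 2 * ⟪Gg f z, D2 f z a b⟫

variable {f}

section basic

variable {z : ℂ}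

theorem hD1 (hf : ContDiffOn ℝ 2 f (ball (0 : ℂ) 1)) (hz : z ∈ ball (0 : ℂ) 1) : HasFDerivAt f (D1 f z) z :=
  ((hf.contDiffAt (isOpen_ball.mem_nhds hz)).differentiableAt (by norm_num)).hasFDerivAt

theorem hD2 (hf : ContDiffOn ℝ 2 f (ball (0 : ℂ) 1)) (hz : z ∈ ball (0 : ℂ) 1) : HasFDerivAt (fderiv ℝ f) (D2 f z) z := by
  have h1 : ContDiffAt ℝ 1 (fderiv ℝ f) z :=
    (hf.contDiffAt (isOpen_ball.mem_nhds hz)).fderiv_right (by norm_num)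
  exact (h1.differentiableAt (by norm_num)).hasFDerivAt

theorem norm_Ee (θ : ℝ) : ‖Ee θ‖ = 1 := Complex.norm_exp_ofReal_mul_I θ

theorem norm_zm (s θ : ℝ) : ‖zm s θ‖ = |s| := by
  rw [zm, norm_mul, norm_Ee, Complex.norm_real, Real.norm_eq_abs, mul_one]

theorem mem_zm {ρ : ℝ} (hρ : ρ < 1) {s θ : ℝ} (hs : |s| ≤ ρ) :
    zm s θ ∈ ball (0 : ℂ) 1 := by
  rw [mem_ball_zero_iff, norm_zm]; linarith

theorem derivQ (hf : ContDiffOn ℝ 2 f (ball (0 : ℂ) 1)) {γ : ℝ → ℂ} {γ' : ℂ} {t : ℝ}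
    (hγ : HasDerivAt γ γ' t) (hz : γ t ∈ ball (0 : ℂ) 1) :
    HasDerivAt (fun t => ‖f (γ t) - f 0‖ ^ 2) (Pp f (γ t) γ') t := by
  have hg : HasDerivAt (fun t => Gg f (γ t)) (D1 f (γ t) γ') t :=
    (((hD1 hf hz).comp_hasDerivAt t hγ).sub_const (f 0))
  have h := (hg.inner ℝ hg)
  have he : (fun t => ⟪Gg f (γ t), Gg f (γ t)⟫) = fun t => ‖f (γ t) - f 0‖ ^ 2 := by
    funext t; rw [real_inner_self_eq_norm_sq]; rfl
  rw [he] at h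
  refine h.congr_deriv ?_; symm
  rw [Pp, real_inner_comm]; ring

theorem derivP (hf : ContDiffOn ℝ 2 f (ball (0 : ℂ) 1)) {γ v : ℝ → ℂ} {γ' v' : ℂ} {t : ℝ}
    (hγ : HasDerivAt γ γ' t) (hv : HasDerivAt v v' t) (hz : γ t ∈ ball (0 : ℂ) 1) :
    HasDerivAt (fun t => Pp f (γ t) (v t)) (Ss f (γ t) γ' (v t) + Pp f (γ t) v') t := by
  have hg : HasDerivAt (fun t => Gg f (γ t)) (D1 f (γ t) γ') t :=
    (((hD1 hf hz).comp_hasDerivAt t hγ).sub_const (f 0))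
  have hA : HasDerivAt (fun t => fderiv ℝ f (γ t)) (D2 f (γ t) γ') t :=
    (hD2 hf hz).comp_hasDerivAt t hγ
  have happ : HasDerivAt (fun t => fderiv ℝ f (γ t) (v t))
      (D2 f (γ t) γ' (v t) + D1 f (γ t) v') t := hA.clm_apply hv
  have h := ((hg.inner ℝ happ).const_mul 2)
  refine h.congr_deriv ?_; symm
  rw [Ss, Pp, inner_add_right]; simp only [D1]; ring

theorem d2_harm (hf : IsHarmonicOn f (ball (0 : ℂ) 1)) (hz : z ∈ ball (0 : ℂ) 1) :
    D2 f z 1 1 + D2 f z Complex.I Complex.I = 0 := by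
  have key : ∀ v u : ℂ, fderiv ℝ (fun w => fderiv ℝ f w v) z u = D2 f z u v := by
    intro v u
    have h := (hD2 hf.1 hz).clm_apply (hasFDerivAt_const v z)
    rw [h.fderiv]
    simp
  have h2 := hf.2 z hz
  rw [key 1 1, key Complex.I Complex.I] at h2
  exact h2

theorem lap_eq (hf : IsHarmonicOn f (ball (0 : ℂ) 1)) (hz : z ∈ ball (0 : ℂ) 1) :
    Ss f z 1 1 + Ss f z Complex.I Complex.I
      = 2 * (‖D1 f z 1‖ ^ 2 + ‖D1 f z Complex.I‖ ^ 2) := by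
  have h0 := d2_harm hf hz
  have : (⟪Gg f z, D2 f z 1 1⟫ : ℝ) + ⟪Gg f z, D2 f z Complex.I Complex.I⟫ = 0 := by
    rw [← inner_add_right, h0, inner_zero_right]
  simp only [Ss, real_inner_self_eq_norm_sq]
  linarith

theorem lap_bound {β : ℝ} (hf : IsHarmonicOn f (ball (0 : ℂ) 1))
    (hβ : ∀ z ∈ ball (0 : ℂ) 1, (1 - ‖z‖ ^ 2) * Lam f z ≤ β) (hz : z ∈ ball (0 : ℂ) 1) :
    Ss f z 1 1 + Ss f z Complex.I Complex.I ≤ 4 * β ^ 2 / (1 - ‖z‖ ^ 2) ^ 2 := by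
  rw [lap_eq hf hz]
  have hwz : ‖D1 f z 1‖ ^ 2 + ‖D1 f z Complex.I‖ ^ 2
      = 2 * (‖wirtingerZ f z‖ ^ 2 + ‖wirtingerZbar f z‖ ^ 2) := by
    have h1 : wirtingerZ f z = (D1 f z 1 - Complex.I * D1 f z Complex.I) / 2 := rfl
    have h2 : wirtingerZbar f z = (D1 f z 1 + Complex.I * D1 f z Complex.I) / 2 := rfl
    set a := D1 f z 1; set b := D1 f z Complex.I
    have hpar : ‖a + Complex.I * b‖ * ‖a + Complex.I * b‖
        + ‖a - Complex.I * b‖ * ‖a - Complex.I * b‖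
        = 2 * (‖a‖ * ‖a‖ + ‖Complex.I * b‖ * ‖Complex.I * b‖) := by
      have := parallelogram_law_with_norm ℝ a (Complex.I * b); simp only [sq] at this; exact this
    have hIb : ‖Complex.I * b‖ = ‖b‖ := by rw [norm_mul, Complex.norm_I, one_mul]
    rw [h1, h2, norm_div, norm_div]
    rw [hIb] at hpar
    simp only [Complex.norm_ofNat]
    nlinarith [hpar]
  have hL : 0 ≤ Lam f z := add_nonneg (norm_nonneg _) (norm_nonneg _)
  have hb := hβ z hz
  have hn : (0:ℝ) < 1 - ‖z‖ ^ 2 := by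
    have := mem_ball_zero_iff.mp hz
    nlinarith [norm_nonneg z]
  rw [le_div_iff₀ (by positivity)]
  have hLam : ‖wirtingerZ f z‖ ^ 2 + ‖wirtingerZbar f z‖ ^ 2 ≤ Lam f z ^ 2 := by
    rw [Lam]; nlinarith [norm_nonneg (wirtingerZ f z), norm_nonneg (wirtingerZbar f z)]
  nlinarith [sq_nonneg (Lam f z), mul_le_mul_of_nonneg_left hb (le_of_lt hn)]

theorem Pp_lin (z a : ℂ) : Pp f z a = a.re * Pp f z 1 + a.im * Pp f z Complex.I := by
  have ha : a = (a.re : ℝ) • (1 : ℂ) + (a.im : ℝ) • Complex.I := by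
    simp [Complex.real_smul, Complex.re_add_im]
  conv_lhs => rw [ha]
  simp only [Pp, map_add, ContinuousLinearMap.map_smul, inner_add_right, real_inner_smul_right,
    real_inner_smul_left]
  ring

theorem Ss_bilin (z a b : ℂ) : Ss f z a b
    = a.re * b.re * Ss f z 1 1 + a.re * b.im * Ss f z 1 Complex.I
      + a.im * b.re * Ss f z Complex.I 1 + a.im * b.im * Ss f z Complex.I Complex.I := by
  have ha : a = (a.re : ℝ) • (1 : ℂ) + (a.im : ℝ) • Complex.I := by
    simp [Complex.real_smul, Complex.re_add_im]
  have hb : b = (b.re : ℝ) • (1 : ℂ) + (b.im : ℝ) • Complex.I := by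
    simp [Complex.real_smul, Complex.re_add_im]
  conv_lhs => rw [ha, hb]
  simp only [Ss, map_add, ContinuousLinearMap.map_smul, ContinuousLinearMap.add_apply,
    ContinuousLinearMap.coe_smul', Pi.smul_apply, inner_add_left, inner_add_right,
    real_inner_smul_left, real_inner_smul_right]
  ring

theorem polar (s θ : ℝ) (hs : s ≠ 0) :
    Pp f (zm s θ) (Ee θ) + s * Ss f (zm s θ) (Ee θ) (Ee θ)
      = s * (Ss f (zm s θ) 1 1 + Ss f (zm s θ) Complex.I Complex.I)
        - (1 / s) * (Ss f (zm s θ) (Complex.I * zm s θ) (Complex.I * zm s θ)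
            + Pp f (zm s θ) (Complex.I * (Complex.I * zm s θ))) := by
  set z := zm s θ with hzdef
  have hre : (Ee θ).re = Real.cos θ := by
    simp [Ee, Complex.exp_ofReal_mul_I_re]
  have him : (Ee θ).im = Real.sin θ := by
    simp [Ee, Complex.exp_ofReal_mul_I_im]
  have hzre : z.re = s * Real.cos θ := by
    rw [hzdef, zm]; simp [hre, him]
  have hzim : z.im = s * Real.sin θ := by
    rw [hzdef, zm]; simp [hre, him]
  have h1 : (Complex.I * z).re = -(s * Real.sin θ) := by simp [hzim]
  have h2 : (Complex.I * z).im = s * Real.cos θ := by simp [hzre]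
  have h3 : (Complex.I * (Complex.I * z)).re = -(s * Real.cos θ) := by simp [h2]
  have h4 : (Complex.I * (Complex.I * z)).im = -(s * Real.sin θ) := by simp [h1]
  have hpyth : Real.sin θ ^ 2 + Real.cos θ ^ 2 = 1 := Real.sin_sq_add_cos_sq θ
  rw [Pp_lin (z := z) (a := Ee θ), Ss_bilin (z := z) (a := Ee θ) (b := Ee θ),
    Ss_bilin (z := z) (a := Complex.I * z) (b := Complex.I * z),
    Pp_lin (z := z) (a := Complex.I * (Complex.I * z)),
    hre, him, h1, h2, h3, h4]
  field_simp
  linear_combination (s * (Ss f z 1 1 + Ss f z Complex.I Complex.I)) * hpyth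

theorem contG (hf : ContDiffOn ℝ 2 f (ball (0 : ℂ) 1)) :
    ContinuousOn (Gg f) (ball (0 : ℂ) 1) :=
  hf.continuousOn.sub continuousOn_const

theorem contD1 (hf : ContDiffOn ℝ 2 f (ball (0 : ℂ) 1)) :
    ContinuousOn (D1 f) (ball (0 : ℂ) 1) :=
  (hf.fderiv_of_isOpen (m := 1) isOpen_ball (by norm_num)).continuousOn

theorem contD2 (hf : ContDiffOn ℝ 2 f (ball (0 : ℂ) 1)) :
    ContinuousOn (D2 f) (ball (0 : ℂ) 1) :=
  (hf.fderiv_of_isOpen (m := 1) isOpen_ball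
    (by norm_num)).continuousOn_fderiv_of_isOpen isOpen_ball (le_refl 1)

theorem contEe : Continuous Ee := by
  unfold Ee; fun_prop

theorem contzm : Continuous (fun p : ℝ × ℝ => zm p.1 p.2) := by
  unfold zm Ee; fun_prop

/-- generic: continuous curve into the ball composed with a ball-continuous map -/
theorem comp_curve {E : Type*} [TopologicalSpace E] {W : ℂ → E}
    (hW : ContinuousOn W (ball (0 : ℂ) 1)) {γ : ℝ → ℂ} (hγ : Continuous γ)
    (hγb : ∀ t, γ t ∈ ball (0 : ℂ) 1) : Continuous (fun t => W (γ t)) :=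
  hW.comp_continuous hγ hγb

section curves

variable {s : ℝ}

theorem cont_zs : Continuous (fun θ : ℝ => zm s θ) :=
  contzm.comp (by fun_prop : Continuous (fun θ : ℝ => ((s : ℝ), θ)))

theorem mem_zs (hs : |s| < 1) (θ : ℝ) : zm s θ ∈ ball (0 : ℂ) 1 := by
  rw [mem_ball_zero_iff, norm_zm]; exact hs

theorem contQθ (hs : |s| < 1) (hf : ContDiffOn ℝ 2 f (ball (0 : ℂ) 1)) :
    Continuous (fun θ : ℝ => ‖f (zm s θ) - f 0‖ ^ 2) := by
  have h := comp_curve (contG hf) (cont_zs (s := s)) (mem_zs hs)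
  simpa [Gg, Function.comp_def] using (continuous_pow 2).comp h.norm

theorem contPθ (hs : |s| < 1) (hf : ContDiffOn ℝ 2 f (ball (0 : ℂ) 1)) :
    Continuous (fun θ : ℝ => Pp f (zm s θ) (Ee θ)) := by
  have h1 := comp_curve (contG hf) (cont_zs (s := s)) (mem_zs hs)
  have h2 := comp_curve (contD1 hf) (cont_zs (s := s)) (mem_zs hs)
  have h3 : Continuous (fun θ : ℝ => D1 f (zm s θ) (Ee θ)) := h2.clm_apply contEe
  exact continuous_const.mul (h1.inner h3)

theorem contSθ (hs : |s| < 1) (hf : ContDiffOn ℝ 2 f (ball (0 : ℂ) 1)) {v w : ℝ → ℂ}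
    (hv : Continuous v) (hw : Continuous w) :
    Continuous (fun θ : ℝ => Ss f (zm s θ) (v θ) (w θ)) := by
  have h1 := comp_curve (contG hf) (cont_zs (s := s)) (mem_zs hs)
  have h2 := comp_curve (contD1 hf) (cont_zs (s := s)) (mem_zs hs)
  have h3 := comp_curve (contD2 hf) (cont_zs (s := s)) (mem_zs hs)
  exact (continuous_const.mul ((h2.clm_apply hv).inner (h2.clm_apply hw))).add
    (continuous_const.mul (h1.inner ((h3.clm_apply hv).clm_apply hw)))

theorem contPθ' (hs : |s| < 1) (hf : ContDiffOn ℝ 2 f (ball (0 : ℂ) 1)) {v : ℝ → ℂ} (hv : Continuous v) :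
    Continuous (fun θ : ℝ => Pp f (zm s θ) (v θ)) := by
  have h1 := comp_curve (contG hf) (cont_zs (s := s)) (mem_zs hs)
  have h2 := comp_curve (contD1 hf) (cont_zs (s := s)) (mem_zs hs)
  exact continuous_const.mul (h1.inner (h2.clm_apply hv))

end curves

theorem Pp_zero (z : ℂ) : Pp f z 0 = 0 := by simp [Pp]

theorem hasDeriv_zs (s θ : ℝ) :
    HasDerivAt (fun θ : ℝ => zm s θ) (Complex.I * zm s θ) θ := by
  have h1 : HasDerivAt (fun w : ℂ => Complex.exp (w * Complex.I))
      (Complex.exp ((θ : ℂ) * Complex.I) * Complex.I) (θ : ℂ) := by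
    simpa [Function.comp_def] using (Complex.hasDerivAt_exp ((θ : ℂ) * Complex.I)).comp (θ : ℂ)
      ((hasDerivAt_id ((θ : ℂ))).mul_const Complex.I)
  have h2 := (h1.comp_ofReal).const_mul (s : ℂ)
  refine h2.congr_deriv ?_; symm
  rw [zm, Ee]; ring

theorem hasDeriv_zx (x θ : ℝ) :
    HasDerivAt (fun x : ℝ => zm x θ) (Ee θ) x := by
  have h := (Complex.ofRealCLM.hasDerivAt (x := x)).mul_const (Ee θ)
  refine h.congr_deriv ?_; symm
  simp

theorem angular_int (hf : ContDiffOn ℝ 2 f (ball (0 : ℂ) 1)) {s : ℝ} (hs : |s| < 1) :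
    (∫ θ in (0:ℝ)..(2 * π), (Ss f (zm s θ) (Complex.I * zm s θ) (Complex.I * zm s θ)
      + Pp f (zm s θ) (Complex.I * (Complex.I * zm s θ)))) = 0 := by
  have hder : ∀ θ ∈ uIcc (0:ℝ) (2 * π),
      HasDerivAt (fun θ => Pp f (zm s θ) (Complex.I * zm s θ))
        (Ss f (zm s θ) (Complex.I * zm s θ) (Complex.I * zm s θ)
          + Pp f (zm s θ) (Complex.I * (Complex.I * zm s θ))) θ := by
    intro θ _
    exact derivP hf (hasDeriv_zs s θ) ((hasDeriv_zs s θ).const_mul Complex.I) (mem_zs hs θ)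
  have hcont : Continuous (fun θ => Ss f (zm s θ) (Complex.I * zm s θ) (Complex.I * zm s θ)
      + Pp f (zm s θ) (Complex.I * (Complex.I * zm s θ))) := by
    have hv : Continuous (fun θ : ℝ => Complex.I * zm s θ) :=
      continuous_const.mul (cont_zs (s := s))
    exact (contSθ hs hf hv hv).add (contPθ' hs hf (continuous_const.mul hv))
  rw [intervalIntegral.integral_eq_sub_of_hasDerivAt hder (hcont.intervalIntegrable _ _)]
  have hz : zm s (2 * π) = zm s 0 := by
    simp only [zm, Ee]
    congr 1
    rw [show ((0 : ℝ) : ℂ) * Complex.I = 0 by simp, Complex.exp_zero,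
      show ((2 * π : ℝ) : ℂ) * Complex.I = 2 * (π : ℂ) * Complex.I by push_cast; ring,
      Complex.exp_two_pi_mul_I]
  rw [hz, sub_self]

theorem comp_K {E : Type*} [TopologicalSpace E] {W : ℂ → E}
    (hW : ContinuousOn W (ball (0 : ℂ) 1)) {ρ : ℝ} (hρ1 : ρ < 1) :
    ContinuousOn (fun p : ℝ × ℝ => W (zm p.1 p.2)) (Icc (-ρ) ρ ×ˢ (univ : Set ℝ)) := by
  apply hW.comp contzm.continuousOn
  rintro ⟨x, θ⟩ ⟨hx, -⟩
  exact mem_zm hρ1 (abs_le.mpr hx)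

theorem contPj (hf : ContDiffOn ℝ 2 f (ball (0 : ℂ) 1)) {ρ : ℝ} (hρ1 : ρ < 1) :
    ContinuousOn (fun p : ℝ × ℝ => Pp f (zm p.1 p.2) (Ee p.2))
      (Icc (-ρ) ρ ×ˢ (univ : Set ℝ)) := by
  have h1 := comp_K (contG hf) hρ1
  have h2 := comp_K (contD1 hf) hρ1
  have h3 : ContinuousOn (fun p : ℝ × ℝ => D1 f (zm p.1 p.2) (Ee p.2))
      (Icc (-ρ) ρ ×ˢ (univ : Set ℝ)) :=
    h2.clm_apply (contEe.comp continuous_snd).continuousOn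
  exact continuousOn_const.mul (h1.inner h3)

theorem contSj (hf : ContDiffOn ℝ 2 f (ball (0 : ℂ) 1)) {ρ : ℝ} (hρ1 : ρ < 1) :
    ContinuousOn (fun p : ℝ × ℝ => Ss f (zm p.1 p.2) (Ee p.2) (Ee p.2))
      (Icc (-ρ) ρ ×ˢ (univ : Set ℝ)) := by
  have h1 := comp_K (contG hf) hρ1
  have h2 := comp_K (contD1 hf) hρ1
  have h3 := comp_K (contD2 hf) hρ1
  have hE : ContinuousOn (fun p : ℝ × ℝ => Ee p.2) (Icc (-ρ) ρ ×ˢ (univ : Set ℝ)) :=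
    (contEe.comp continuous_snd).continuousOn
  exact (continuousOn_const.mul ((h2.clm_apply hE).inner (h2.clm_apply hE))).add
    (continuousOn_const.mul (h1.inner ((h3.clm_apply hE).clm_apply hE)))

section param

variable (hf : ContDiffOn ℝ 2 f (ball (0 : ℂ) 1)) {r ρ x₀ : ℝ}

theorem hasDerivA (hf : ContDiffOn ℝ 2 f (ball (0 : ℂ) 1)) (hr : 0 ≤ r) (hρ : r < ρ)
    (hρ1 : ρ < 1) (hx₀ : x₀ ∈ Icc 0 r) :
    HasDerivAt (fun x => ∫ θ in (0:ℝ)..(2 * π), ‖f (zm x θ) - f 0‖ ^ 2)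
      (∫ θ in (0:ℝ)..(2 * π), Pp f (zm x₀ θ) (Ee θ)) x₀ := by
  obtain ⟨hx₀0, hx₀r⟩ := hx₀
  have hx₀1 : |x₀| < 1 := by rw [_root_.abs_of_nonneg hx₀0]; linarith
  have hK : IsCompact (Icc (-ρ) ρ ×ˢ Icc 0 (2 * π)) := isCompact_Icc.prod isCompact_Icc
  obtain ⟨M, hM⟩ := hK.exists_bound_of_continuousOn
    ((contPj hf hρ1).mono (prod_mono_right (subset_univ _)))
  have hball : ∀ x ∈ ball x₀ (ρ - r), |x| < ρ := by
    intro x hx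
    rw [mem_ball, Real.dist_eq] at hx
    have h2 := abs_lt.mp hx
    rw [abs_lt]
    constructor <;> linarith [h2.1, h2.2]
  have h := intervalIntegral.hasDerivAt_integral_of_dominated_loc_of_deriv_le
    (F := fun x θ => ‖f (zm x θ) - f 0‖ ^ 2) (F' := fun x θ => Pp f (zm x θ) (Ee θ))
    (bound := fun _ => M) (a := 0) (b := 2 * π) (μ := volume) (x₀ := x₀)
    (s := ball x₀ (ρ - r)) (ball_mem_nhds x₀ (by linarith))
    ?_ ?_ ?_ ?_ ?_ ?_
  · exact h.2
  · filter_upwards [Ioo_mem_nhds (abs_lt.mp hx₀1).1 (abs_lt.mp hx₀1).2] with x hx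
    exact (contQθ (abs_lt.mpr ⟨hx.1, hx.2⟩) hf).aestronglyMeasurable.restrict
  · exact (contQθ hx₀1 hf).intervalIntegrable _ _
  · exact (contPθ hx₀1 hf).aestronglyMeasurable.restrict
  · apply Filter.Eventually.of_forall
    intro θ hθ x hx
    have hθ' : θ ∈ Icc 0 (2 * π) := by
      rw [uIoc_of_le (by positivity : (0:ℝ) ≤ 2 * π)] at hθ
      exact Ioc_subset_Icc_self hθ
    have := hM (x, θ) ⟨abs_le.mp (le_of_lt (hball x hx)) |>.1 |> fun h => ⟨h, (abs_le.mp (le_of_lt (hball x hx))).2⟩, hθ'⟩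
    simpa using this
  · exact intervalIntegrable_const
  · apply Filter.Eventually.of_forall
    intro θ hθ x hx
    exact derivQ hf (hasDeriv_zx x θ) (mem_zm hρ1 (le_of_lt (hball x hx)))

theorem hasDerivA' (hf : ContDiffOn ℝ 2 f (ball (0 : ℂ) 1)) (hr : 0 ≤ r) (hρ : r < ρ)
    (hρ1 : ρ < 1) (hx₀ : x₀ ∈ Icc 0 r) :
    HasDerivAt (fun x => ∫ θ in (0:ℝ)..(2 * π), Pp f (zm x θ) (Ee θ))
      (∫ θ in (0:ℝ)..(2 * π), Ss f (zm x₀ θ) (Ee θ) (Ee θ)) x₀ := by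
  obtain ⟨hx₀0, hx₀r⟩ := hx₀
  have hx₀1 : |x₀| < 1 := by rw [_root_.abs_of_nonneg hx₀0]; linarith
  have hK : IsCompact (Icc (-ρ) ρ ×ˢ Icc 0 (2 * π)) := isCompact_Icc.prod isCompact_Icc
  obtain ⟨M, hM⟩ := hK.exists_bound_of_continuousOn
    ((contSj hf hρ1).mono (prod_mono_right (subset_univ _)))
  have hball : ∀ x ∈ ball x₀ (ρ - r), |x| < ρ := by
    intro x hx
    rw [mem_ball, Real.dist_eq] at hx
    have h2 := abs_lt.mp hx
    rw [abs_lt]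
    constructor <;> linarith [h2.1, h2.2]
  have h := intervalIntegral.hasDerivAt_integral_of_dominated_loc_of_deriv_le
    (F := fun x θ => Pp f (zm x θ) (Ee θ)) (F' := fun x θ => Ss f (zm x θ) (Ee θ) (Ee θ))
    (bound := fun _ => M) (a := 0) (b := 2 * π) (μ := volume) (x₀ := x₀)
    (s := ball x₀ (ρ - r)) (ball_mem_nhds x₀ (by linarith))
    ?_ ?_ ?_ ?_ ?_ ?_
  · exact h.2
  · filter_upwards [Ioo_mem_nhds (abs_lt.mp hx₀1).1 (abs_lt.mp hx₀1).2] with x hx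
    exact (contPθ (abs_lt.mpr ⟨hx.1, hx.2⟩) hf).aestronglyMeasurable.restrict
  · exact (contPθ hx₀1 hf).intervalIntegrable _ _
  · exact (contSθ hx₀1 hf contEe contEe).aestronglyMeasurable.restrict
  · apply Filter.Eventually.of_forall
    intro θ hθ x hx
    have hθ' : θ ∈ Icc 0 (2 * π) := by
      rw [uIoc_of_le (by positivity : (0:ℝ) ≤ 2 * π)] at hθ
      exact Ioc_subset_Icc_self hθ
    have := hM (x, θ) ⟨abs_le.mp (le_of_lt (hball x hx)) |>.1 |> fun h => ⟨h, (abs_le.mp (le_of_lt (hball x hx))).2⟩, hθ'⟩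
    simpa using this
  · exact intervalIntegrable_const
  · apply Filter.Eventually.of_forall
    intro θ hθ x hx
    have h := derivP hf (hasDeriv_zx x θ) (hasDerivAt_const x (Ee θ))
      (mem_zm hρ1 (le_of_lt (hball x hx)))
    simpa [Pp_zero] using h

end param

end basic

end St19


/-- let `f` be harmonic in the unit disk with Bloch number bounded
by `β`, i.e. `(1-|z|²) Λ_f(z) ≤ β` on `𝔻`. Then for every `r ∈ (0,1)`,
`(1/2π) ∫₀^{2π} |f(re^{iθ}) - f(0)|² dθ ≤ β² ∑_{n=1}^∞ r^{2n}/n = β² log(1/(1-r²))`. -/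
theorem stmt19 (f : ℂ → ℂ) (hf : IsHarmonicOn f (ball (0 : ℂ) 1)) (β : ℝ)
    (hβ : ∀ z ∈ ball (0 : ℂ) 1, (1 - ‖z‖ ^ 2) * Lam f z ≤ β) :
    ∀ r : ℝ, 0 < r → r < 1 →
      ((1 / (2 * π)) *
          ∫ θ in (0:ℝ)..(2 * π),
            ‖f ((r : ℂ) * Complex.exp ((θ : ℂ) * Complex.I)) - f 0‖ ^ 2
        ≤ β ^ 2 * ∑' n : ℕ, r ^ (2 * (n + 1)) / ((n : ℝ) + 1)) ∧
      (∑' n : ℕ, r ^ (2 * (n + 1)) / ((n : ℝ) + 1)) = Real.log (1 / (1 - r ^ 2)) := by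
  intro r hr0 hr1
  have hr2 : r ^ 2 < 1 := by nlinarith
  have habs : |r ^ 2| < 1 := by rw [_root_.abs_of_pos (by positivity)]; exact hr2
  -- the series identity
  have hsum : (∑' n : ℕ, r ^ (2 * (n + 1)) / ((n : ℝ) + 1)) = Real.log (1 / (1 - r ^ 2)) := by
    have hs := hasSum_pow_div_log_of_abs_lt_one habs
    have hcong : (fun n : ℕ => r ^ (2 * (n + 1)) / ((n : ℝ) + 1))
        = fun n : ℕ => (r ^ 2) ^ (n + 1) / ((n : ℝ) + 1) := by
      funext n; rw [← pow_mul]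
    rw [hcong]
    have := hs.tsum_eq
    rw [show (fun n : ℕ => (r ^ 2) ^ (n + 1) / ((n : ℕ) + 1 : ℝ))
        = fun n : ℕ => (r ^ 2) ^ (n + 1) / ((n : ℝ) + 1) from rfl] at this
    rw [this, one_div, Real.log_inv]
  refine ⟨?_, hsum⟩
  -- setup
  open St19 in
  have h2f := hf.1
  set ρ : ℝ := (1 + r) / 2 with hρdef
  have hρr : r < ρ := by rw [hρdef]; linarith
  have hρ1 : ρ < 1 := by rw [hρdef]; linarith
  set A : ℝ → ℝ := fun x => ∫ θ in (0:ℝ)..(2 * π), ‖f (St19.zm x θ) - f 0‖ ^ 2 with hAdef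
  set A' : ℝ → ℝ := fun x => ∫ θ in (0:ℝ)..(2 * π), St19.Pp f (St19.zm x θ) (St19.Ee θ) with hA'def
  set S2 : ℝ → ℝ := fun x => ∫ θ in (0:ℝ)..(2 * π),
    St19.Ss f (St19.zm x θ) (St19.Ee θ) (St19.Ee θ) with hS2def
  set B : ℝ → ℝ := fun x => x * A' x with hBdef
  set ψ : ℝ → ℝ := fun x => 4 * π * β ^ 2 * (x ^ 2 / (1 - x ^ 2)) with hψdef
  set φ : ℝ → ℝ := fun x => -(2 * π * β ^ 2) * Real.log (1 - x ^ 2) with hφdef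
  have hA : ∀ x ∈ Icc (0:ℝ) r, HasDerivAt A (A' x) x := by
    intro x hx; exact St19.hasDerivA h2f hr0.le hρr hρ1 hx
  have hA' : ∀ x ∈ Icc (0:ℝ) r, HasDerivAt A' (S2 x) x := by
    intro x hx; exact St19.hasDerivA' h2f hr0.le hρr hρ1 hx
  have habs1 : ∀ x ∈ Icc (0:ℝ) r, |x| < 1 := by
    intro x hx; rw [abs_lt]; constructor <;> [linarith [hx.1]; linarith [hx.2]]
  have hne : ∀ x ∈ Icc (0:ℝ) r, 1 - x ^ 2 ≠ 0 := by
    intro x hx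
    have := habs1 x hx
    have h2 : x ^ 2 < 1 := by rw [← _root_.sq_abs]; nlinarith [abs_nonneg x]
    linarith
  have hB : ∀ x ∈ Icc (0:ℝ) r, HasDerivAt B (A' x + x * S2 x) x := by
    intro x hx
    have h := (hasDerivAt_id x).mul (hA' x hx)
    refine h.congr_deriv ?_; symm
    simp only [id_eq]
    ring
  -- key derivative bound for B
  have KB : ∀ x ∈ Ioo (0:ℝ) r, A' x + x * S2 x ≤ 8 * π * β ^ 2 * x / (1 - x ^ 2) ^ 2 := by
    intro x hx
    have hxI : x ∈ Icc (0:ℝ) r := ⟨hx.1.le, hx.2.le⟩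
    have hx1 : |x| < 1 := habs1 x hxI
    have hxne : x ≠ 0 := ne_of_gt hx.1
    have hint1 : IntervalIntegrable (fun θ => St19.Pp f (St19.zm x θ) (St19.Ee θ))
        volume 0 (2 * π) := (St19.contPθ hx1 h2f).intervalIntegrable _ _
    have hint2 : IntervalIntegrable (fun θ =>
        St19.Ss f (St19.zm x θ) (St19.Ee θ) (St19.Ee θ)) volume 0 (2 * π) :=
      (St19.contSθ hx1 h2f St19.contEe St19.contEe).intervalIntegrable _ _
    have hlapcont : Continuous (fun θ => St19.Ss f (St19.zm x θ) 1 1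
        + St19.Ss f (St19.zm x θ) Complex.I Complex.I) :=
      (St19.contSθ hx1 h2f continuous_const continuous_const).add
        (St19.contSθ hx1 h2f continuous_const continuous_const)
    have hangcont : Continuous (fun θ => St19.Ss f (St19.zm x θ) (Complex.I * St19.zm x θ)
        (Complex.I * St19.zm x θ) + St19.Pp f (St19.zm x θ)
          (Complex.I * (Complex.I * St19.zm x θ))) := by
      have hv : Continuous (fun θ : ℝ => Complex.I * St19.zm x θ) :=
        continuous_const.mul (St19.cont_zs (s := x))
      exact (St19.contSθ hx1 h2f hv hv).add (St19.contPθ' hx1 h2f (continuous_const.mul hv))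
    have step1 : A' x + x * S2 x = ∫ θ in (0:ℝ)..(2 * π),
        (St19.Pp f (St19.zm x θ) (St19.Ee θ)
          + x * St19.Ss f (St19.zm x θ) (St19.Ee θ) (St19.Ee θ)) := by
      rw [intervalIntegral.integral_add hint1 (hint2.const_mul x),
        intervalIntegral.integral_const_mul]
    have step2 : (∫ θ in (0:ℝ)..(2 * π),
        (St19.Pp f (St19.zm x θ) (St19.Ee θ)
          + x * St19.Ss f (St19.zm x θ) (St19.Ee θ) (St19.Ee θ)))
        = x * ∫ θ in (0:ℝ)..(2 * π), (St19.Ss f (St19.zm x θ) 1 1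
            + St19.Ss f (St19.zm x θ) Complex.I Complex.I) := by
      have hcong : ∀ θ : ℝ, St19.Pp f (St19.zm x θ) (St19.Ee θ)
          + x * St19.Ss f (St19.zm x θ) (St19.Ee θ) (St19.Ee θ)
          = x * (St19.Ss f (St19.zm x θ) 1 1 + St19.Ss f (St19.zm x θ) Complex.I Complex.I)
            - (1 / x) * (St19.Ss f (St19.zm x θ) (Complex.I * St19.zm x θ)
              (Complex.I * St19.zm x θ) + St19.Pp f (St19.zm x θ)
                (Complex.I * (Complex.I * St19.zm x θ))) := fun θ => St19.polar x θ hxne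
      rw [intervalIntegral.integral_congr (fun θ _ => hcong θ)]
      rw [intervalIntegral.integral_sub ((hlapcont.intervalIntegrable _ _).const_mul x)
        ((hangcont.intervalIntegrable _ _).const_mul (1 / x)),
        intervalIntegral.integral_const_mul, intervalIntegral.integral_const_mul,
        St19.angular_int h2f hx1]
      ring
    have step3 : (∫ θ in (0:ℝ)..(2 * π), (St19.Ss f (St19.zm x θ) 1 1
        + St19.Ss f (St19.zm x θ) Complex.I Complex.I))
        ≤ 2 * π * (4 * β ^ 2 / (1 - x ^ 2) ^ 2) := by
      have hb : ∀ θ ∈ Icc (0:ℝ) (2 * π), St19.Ss f (St19.zm x θ) 1 1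
          + St19.Ss f (St19.zm x θ) Complex.I Complex.I ≤ 4 * β ^ 2 / (1 - x ^ 2) ^ 2 := by
        intro θ _
        have hmem := St19.mem_zs (s := x) hx1 θ
        have := St19.lap_bound hf hβ hmem
        rwa [St19.norm_zm, _root_.sq_abs] at this
      calc (∫ θ in (0:ℝ)..(2 * π), (St19.Ss f (St19.zm x θ) 1 1
            + St19.Ss f (St19.zm x θ) Complex.I Complex.I))
          ≤ ∫ _ in (0:ℝ)..(2 * π), (4 * β ^ 2 / (1 - x ^ 2) ^ 2) := by
            apply intervalIntegral.integral_mono_on (by positivity)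
              (hlapcont.intervalIntegrable _ _) intervalIntegrable_const hb
        _ = 2 * π * (4 * β ^ 2 / (1 - x ^ 2) ^ 2) := by
            rw [intervalIntegral.integral_const, smul_eq_mul]; ring
    rw [step1, step2]
    calc x * ∫ θ in (0:ℝ)..(2 * π), (St19.Ss f (St19.zm x θ) 1 1
          + St19.Ss f (St19.zm x θ) Complex.I Complex.I)
        ≤ x * (2 * π * (4 * β ^ 2 / (1 - x ^ 2) ^ 2)) :=
          mul_le_mul_of_nonneg_left step3 hx.1.le
      _ = 8 * π * β ^ 2 * x / (1 - x ^ 2) ^ 2 := by ring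
  -- derivative of ψ
  have hψ : ∀ x ∈ Icc (0:ℝ) r, HasDerivAt ψ (8 * π * β ^ 2 * x / (1 - x ^ 2) ^ 2) x := by
    intro x hx
    have hne' := hne x hx
    have h1 : HasDerivAt (fun x : ℝ => x ^ 2 / (1 - x ^ 2))
        ((2 * x * (1 - x ^ 2) - x ^ 2 * (0 - 2 * x)) / (1 - x ^ 2) ^ 2) x := by
      refine HasDerivAt.div (by simpa using hasDerivAt_pow 2 x)
        ((hasDerivAt_const x 1).sub (by simpa using hasDerivAt_pow 2 x)) hne'
    have h2 := h1.const_mul (4 * π * β ^ 2)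
    refine h2.congr_deriv ?_; symm
    field_simp
    ring
  -- B ≤ ψ on [0, r]
  have hBψ : ∀ s ∈ Icc (0:ℝ) r, B s ≤ ψ s := by
    have hanti : AntitoneOn (fun x => B x - ψ x) (Icc (0:ℝ) r) := by
      apply antitoneOn_of_deriv_nonpos (convex_Icc 0 r)
      · intro x hx
        exact ((hB x hx).sub (hψ x hx)).continuousAt.continuousWithinAt
      · intro x hx
        rw [interior_Icc] at hx
        exact (((hB x (Ioo_subset_Icc_self hx)).sub
          (hψ x (Ioo_subset_Icc_self hx))).differentiableAt).differentiableWithinAt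
      · intro x hx
        rw [interior_Icc] at hx
        rw [show (fun x => B x - ψ x) = B - ψ from rfl, ((hB x (Ioo_subset_Icc_self hx)).sub (hψ x (Ioo_subset_Icc_self hx))).deriv]
        have := KB x hx
        linarith
    intro s hs
    have h0 : (0:ℝ) ∈ Icc (0:ℝ) r := ⟨le_refl 0, hr0.le⟩
    have h2 : B s - ψ s ≤ B 0 - ψ 0 := hanti h0 hs hs.1
    have hB0 : B 0 = 0 := by show (0:ℝ) * A' 0 = 0; ring
    have hψ0 : ψ 0 = 0 := by show 4 * π * β ^ 2 * ((0:ℝ) ^ 2 / (1 - (0:ℝ) ^ 2)) = 0; norm_num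
    rw [hB0, hψ0] at h2
    linarith
  -- derivative of φ
  have hφ : ∀ x ∈ Icc (0:ℝ) r, HasDerivAt φ (4 * π * β ^ 2 * x / (1 - x ^ 2)) x := by
    intro x hx
    have hne' := hne x hx
    have h1 : HasDerivAt (fun x : ℝ => Real.log (1 - x ^ 2))
        (-((1 - x ^ 2)⁻¹ * (2 * x))) x := by
      have hinner : HasDerivAt (fun x : ℝ => 1 - x ^ 2) (0 - 2 * x) x :=
        (hasDerivAt_const x 1).sub (by simpa using hasDerivAt_pow 2 x)
      simpa [Function.comp_def] using (Real.hasDerivAt_log hne').comp x hinner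
    have h2 := h1.const_mul (-(2 * π * β ^ 2))
    refine h2.congr_deriv ?_; symm
    field_simp
    ring
  -- A ≤ φ on [0, r]
  have hAφ : A r ≤ φ r := by
    have hanti : AntitoneOn (fun x => A x - φ x) (Icc (0:ℝ) r) := by
      apply antitoneOn_of_deriv_nonpos (convex_Icc 0 r)
      · intro x hx
        exact ((hA x hx).sub (hφ x hx)).continuousAt.continuousWithinAt
      · intro x hx
        rw [interior_Icc] at hx
        exact (((hA x (Ioo_subset_Icc_self hx)).sub
          (hφ x (Ioo_subset_Icc_self hx))).differentiableAt).differentiableWithinAt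
      · intro x hx
        rw [interior_Icc] at hx
        rw [show (fun x => A x - φ x) = A - φ from rfl, ((hA x (Ioo_subset_Icc_self hx)).sub (hφ x (Ioo_subset_Icc_self hx))).deriv]
        have hxI : x ∈ Icc (0:ℝ) r := Ioo_subset_Icc_self hx
        have hBx := hBψ x hxI
        have hA'x : A' x ≤ 4 * π * β ^ 2 * x / (1 - x ^ 2) := by
          have hx0 : 0 < x := hx.1
          have h1x2 : (0:ℝ) < 1 - x ^ 2 := by
            have := habs1 x hxI
            have h2 : x ^ 2 < 1 := by rw [← _root_.sq_abs]; nlinarith [abs_nonneg x]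
            linarith
          have hBx' : x * A' x ≤ 4 * π * β ^ 2 * (x ^ 2 / (1 - x ^ 2)) := hBx
          calc A' x = (x * A' x) / x := by field_simp
            _ ≤ (4 * π * β ^ 2 * (x ^ 2 / (1 - x ^ 2))) / x := by
                exact (div_le_div_iff_of_pos_right hx0).mpr hBx'
            _ = 4 * π * β ^ 2 * x / (1 - x ^ 2) := by field_simp
        linarith
    have h0 : (0:ℝ) ∈ Icc (0:ℝ) r := ⟨le_refl 0, hr0.le⟩
    have hrI : r ∈ Icc (0:ℝ) r := ⟨hr0.le, le_refl r⟩
    have h2 : A r - φ r ≤ A 0 - φ 0 := hanti h0 hrI hr0.le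
    have hA0 : A 0 = 0 := by
      show (∫ θ in (0:ℝ)..(2 * π), ‖f (St19.zm 0 θ) - f 0‖ ^ 2) = 0
      have : ∀ θ : ℝ, ‖f (St19.zm 0 θ) - f 0‖ ^ 2 = 0 := by
        intro θ
        rw [show St19.zm 0 θ = 0 by rw [St19.zm]; simp]
        simp
      rw [intervalIntegral.integral_congr (fun θ _ => this θ)]
      simp
    have hφ0 : φ 0 = 0 := by rw [hφdef]; simp
    rw [hA0, hφ0] at h2
    linarith
  -- conclude
  have hπ : (0:ℝ) < π := Real.pi_pos
  have hφr : φ r = -(2 * π * β ^ 2) * Real.log (1 - r ^ 2) := rfl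
  have hgoal : (1 / (2 * π)) * A r ≤ β ^ 2 * Real.log (1 / (1 - r ^ 2)) := by
    calc (1 / (2 * π)) * A r ≤ (1 / (2 * π)) * φ r := by
          apply mul_le_mul_of_nonneg_left hAφ (by positivity)
      _ = β ^ 2 * Real.log (1 / (1 - r ^ 2)) := by
          rw [hφr, one_div (1 - r ^ 2), Real.log_inv]
          field_simp
  rw [hsum]
  exact hgoal
end
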